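/- Let Ψ be a frame for a Hilbert space H. The map O ↦ (⟨O ψ̃_n, ψ_m⟩)_{m,n} from B(H) to B(ℓ²) is an injective algebra homomorphism: it is linear, injective, and maps composition of operators to matrix multiplication. -/

import Mathlib

open scoped InnerProductSpace NNReal ENNReal

noncomputable section

local notation "ℓ²" => lp (fun _ : ℕ => ℂ) 2

variable {H₁ H₂ H₃ : Type*}
  [NormedAddCommGroup H₁] [InnerProductSpace ℂ H₁] [CompleteSpace H₁]
  [NormedAddCommGroup H₂] [InnerProductSpace ℂ H₂] [CompleteSpace H₂]
  [NormedAddCommGroup H₃] [InnerProductSpace ℂ H₃] [CompleteSpace H₃]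

/-- `ψ` is a Bessel sequence with bound `B`:  `∑ₖ |⟨f, ψₖ⟩|² ≤ B ‖f‖²`.
(Note: the paper's `⟨f, ψₖ⟩`, linear in `f`, is Mathlib's `⟪ψ k, f⟫_ℂ`.) -/
def IsBessel {H : Type*} [NormedAddCommGroup H] [InnerProductSpace ℂ H]
    (ψ : ℕ → H) (B : ℝ) : Prop :=
  ∀ f : H, Summable (fun k => ‖⟪ψ k, f⟫_ℂ‖ ^ 2) ∧
    ∑' k, ‖⟪ψ k, f⟫_ℂ‖ ^ 2 ≤ B * ‖f‖ ^ 2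

/-- `ψ` is a frame with bounds `A`, `B`:  `A ‖f‖² ≤ ∑ₖ |⟨f, ψₖ⟩|² ≤ B ‖f‖²`. -/
def IsFrame {H : Type*} [NormedAddCommGroup H] [InnerProductSpace ℂ H]
    (ψ : ℕ → H) (A B : ℝ) : Prop :=
  0 < A ∧ ∀ f : H, Summable (fun k => ‖⟪ψ k, f⟫_ℂ‖ ^ 2) ∧
    A * ‖f‖ ^ 2 ≤ ∑' k, ‖⟪ψ k, f⟫_ℂ‖ ^ 2 ∧
    ∑' k, ‖⟪ψ k, f⟫_ℂ‖ ^ 2 ≤ B * ‖f‖ ^ 2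

/-- `C` is the analysis operator of `ψ`:  `C f = (⟨f, ψₖ⟩)ₖ`. -/
def IsAnalysis {H : Type*} [NormedAddCommGroup H] [InnerProductSpace ℂ H]
    (ψ : ℕ → H) (C : H →L[ℂ] ℓ²) : Prop :=
  ∀ (f : H) (k : ℕ), C f k = ⟪ψ k, f⟫_ℂ

/-- `D` is the synthesis operator of `ψ`:  `D c = ∑ₖ cₖ ψₖ`. -/
def IsSynthesis {H : Type*} [NormedAddCommGroup H] [InnerProductSpace ℂ H]
    (ψ : ℕ → H) (D : ℓ² →L[ℂ] H) : Prop :=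
  ∀ c : ℓ², HasSum (fun k => c k • ψ k) (D c)

/-- `S` is the frame operator of `ψ`:  `S f = ∑ₖ ⟨f, ψₖ⟩ ψₖ`. -/
def IsFrameOp {H : Type*} [NormedAddCommGroup H] [InnerProductSpace ℂ H]
    (ψ : ℕ → H) (S : H →L[ℂ] H) : Prop :=
  ∀ f : H, HasSum (fun k => ⟪ψ k, f⟫_ℂ • ψ k) (S f)

/-- `dψ` is the canonical dual of `ψ`, whose frame operator is `S`: `dψ k = S⁻¹ ψ k`. -/
def IsCanonicalDual {H : Type*} [NormedAddCommGroup H] [InnerProductSpace ℂ H]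
    (ψ : ℕ → H) (S : H →L[ℂ] H) (dψ : ℕ → H) : Prop :=
  IsFrameOp ψ S ∧ ∀ k, S (dψ k) = ψ k

/-- `ψ` is a Riesz basis with bounds `A`, `B`: it is complete and
`A ∑|cₖ|² ≤ ‖∑ cₖ ψₖ‖² ≤ B ∑|cₖ|²` for all finite sequences `c`. -/
def IsRieszBasis {H : Type*} [NormedAddCommGroup H] [InnerProductSpace ℂ H]
    (ψ : ℕ → H) (A B : ℝ) : Prop :=
  0 < A ∧ (Submodule.span ℂ (Set.range ψ)).topologicalClosure = ⊤ ∧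
    ∀ c : ℕ →₀ ℂ,
      A * ∑ k ∈ c.support, ‖c k‖ ^ 2 ≤ ‖∑ k ∈ c.support, c k • ψ k‖ ^ 2 ∧
      ‖∑ k ∈ c.support, c k • ψ k‖ ^ 2 ≤ B * ∑ k ∈ c.support, ‖c k‖ ^ 2

section aux

variable {H : Type*} [NormedAddCommGroup H] [InnerProductSpace ℂ H] [CompleteSpace H]
variable {ψ : ℕ → H} {A B : ℝ}

lemma frame_memℓp (hΨ : IsFrame ψ A B) (f : H) :
    Memℓp (fun k => (⟪ψ k, f⟫_ℂ : ℂ)) 2 := by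
  apply memℓp_gen
  have h := (hΨ.2 f).1
  have : (2 : ENNReal).toReal = ((2:ℕ):ℝ) := by norm_num
  rw [this]
  simpa [Real.rpow_natCast] using h

/-- analysis operator exists -/
lemma exists_analysis (hΨ : IsFrame ψ A B) :
    ∃ C : H →L[ℂ] ℓ², ∀ (f : H) (k : ℕ), C f k = ⟪ψ k, f⟫_ℂ := by
  set L : H →ₗ[ℂ] ℓ² :=
    { toFun := fun f => ⟨fun k => ⟪ψ k, f⟫_ℂ, frame_memℓp hΨ f⟩
      map_add' := by intro f g; apply lp.ext; funext k; simp [inner_add_right]; rfl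
      map_smul' := by intro a f; apply lp.ext; funext k; simp [inner_smul_right] }
  have hB0 : (0:ℝ) ≤ max B 0 := le_max_right _ _
  refine ⟨L.mkContinuous (Real.sqrt (max B 0)) ?_, fun f k => rfl⟩
  intro f
  have h2 : ‖L f‖ ^ (2:ℝ) = ∑' k, ‖⟪ψ k, f⟫_ℂ‖ ^ (2:ℝ) := by
    have := lp.norm_rpow_eq_tsum (p := 2) (by norm_num) (L f)
    simp at this ⊢; exact this
  have hle : ‖L f‖ ^ (2:ℝ) ≤ (max B 0) * ‖f‖ ^ 2 := by
    rw [h2]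
    have h := (hΨ.2 f).2.2
    calc ∑' k, ‖⟪ψ k, f⟫_ℂ‖ ^ (2:ℝ) = ∑' k, ‖⟪ψ k, f⟫_ℂ‖ ^ (2:ℕ) := by
          congr 1; funext k; rw [← Real.rpow_natCast]; norm_num
      _ ≤ B * ‖f‖ ^ 2 := h
      _ ≤ (max B 0) * ‖f‖ ^ 2 := by
          gcongr; exact le_max_left _ _
  have hle' : ‖L f‖ ^ (2:ℕ) ≤ (max B 0) * ‖f‖ ^ 2 := by
    have h := hle
    rwa [show (2:ℝ) = ((2:ℕ):ℝ) by norm_num, Real.rpow_natCast] at h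
  calc ‖L f‖ = Real.sqrt (‖L f‖ ^ 2) := (Real.sqrt_sq (norm_nonneg _)).symm
    _ ≤ Real.sqrt ((max B 0) * ‖f‖ ^ 2) := Real.sqrt_le_sqrt hle'
    _ = Real.sqrt (max B 0) * ‖f‖ := by
        rw [Real.sqrt_mul hB0, Real.sqrt_sq (norm_nonneg f)]


/-- synthesis: for any c ∈ ℓ², ∑ c k • ψ k converges -/
lemma exists_synthesis (hΨ : IsFrame ψ A B) (c : ℓ²) :
    ∃ h : H, HasSum (fun k => c k • ψ k) h := by
  obtain ⟨C, hC⟩ := exists_analysis hΨ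
  have h1 : HasSum (fun n : ℕ => lp.single 2 n (c n)) c :=
    lp.hasSum_single (by norm_num) c
  have h2 := (ContinuousLinearMap.adjoint C).hasSum h1
  refine ⟨ContinuousLinearMap.adjoint C c, ?_⟩
  have key : ∀ (n : ℕ) (a : ℂ),
      ContinuousLinearMap.adjoint C (lp.single 2 n a) = a • ψ n := by
    intro n a
    apply ext_inner_right ℂ
    intro v
    rw [ContinuousLinearMap.adjoint_inner_left, inner_smul_left]
    rw [show (⟪lp.single 2 n a, C v⟫_ℂ) = ⟪a, C v n⟫_ℂ from lp.inner_single_left n a (C v)]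
    rw [hC v n]
    simp [RCLike.inner_apply]; ring
  have : (fun n : ℕ => ContinuousLinearMap.adjoint C (lp.single 2 n (c n)))
      = fun n => c n • ψ n := by
    funext n; exact key n (c n)
  rwa [this] at h2

/-- lower frame inequality gives: inner vanishing implies zero -/
lemma eq_zero_of_inner_eq_zero (hΨ : IsFrame ψ A B) {f : H}
    (h : ∀ k, ⟪ψ k, f⟫_ℂ = 0) : f = 0 := by
  have h1 := (hΨ.2 f).2.1
  have h2 : ∑' k, ‖⟪ψ k, f⟫_ℂ‖ ^ 2 = 0 := by
    simp [h]
  rw [h2] at h1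
  have hA := hΨ.1
  have : ‖f‖ ^ 2 ≤ 0 := by nlinarith
  have : ‖f‖ = 0 := by nlinarith [sq_nonneg ‖f‖, norm_nonneg f]
  exact norm_eq_zero.mp this

/-- ⟪f, S f⟫ = ∑ ‖⟪ψ k, f⟫‖² -/
lemma inner_frameOp {S' : H →L[ℂ] H}
    (hS : ∀ f : H, HasSum (fun k => ⟪ψ k, f⟫_ℂ • ψ k) (S' f))
    (hΨ : IsFrame ψ A B) (f : H) :
    ⟪f, S' f⟫_ℂ = ((∑' k, ‖⟪ψ k, f⟫_ℂ‖ ^ 2 : ℝ) : ℂ) := by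
  have h1 := (innerSL ℂ f).hasSum (hS f)
  have h2 : (fun k => (innerSL ℂ f) (⟪ψ k, f⟫_ℂ • ψ k))
      = fun k => ((‖⟪ψ k, f⟫_ℂ‖ ^ 2 : ℝ) : ℂ) := by
    funext k
    simp only [innerSL_apply_apply, inner_smul_right]
    rw [← inner_conj_symm f (ψ k), RCLike.mul_conj]
    norm_cast
  rw [h2] at h1
  have h3 : HasSum (fun k => ((‖⟪ψ k, f⟫_ℂ‖ ^ 2 : ℝ) : ℂ))
      ((∑' k, ‖⟪ψ k, f⟫_ℂ‖ ^ 2 : ℝ) : ℂ) :=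
    Complex.hasSum_ofReal.mpr (hΨ.2 f).1.hasSum
  exact h1.unique h3

/-- lower bound for frame operator -/
lemma frameOp_norm_le {S' : H →L[ℂ] H}
    (hS : ∀ f : H, HasSum (fun k => ⟪ψ k, f⟫_ℂ • ψ k) (S' f))
    (hΨ : IsFrame ψ A B) (f : H) : A * ‖f‖ ≤ ‖S' f‖ := by
  have h1 := inner_frameOp hS hΨ f
  have h2 := (hΨ.2 f).2.1
  have h3 : A * ‖f‖ ^ 2 ≤ ‖⟪f, S' f⟫_ℂ‖ := by
    rw [h1]
    rw [Complex.norm_real]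
    calc A * ‖f‖ ^ 2 ≤ ∑' k, ‖⟪ψ k, f⟫_ℂ‖ ^ 2 := h2
      _ ≤ |∑' k, ‖⟪ψ k, f⟫_ℂ‖ ^ 2| := le_abs_self _
      _ = ‖(∑' k, ‖⟪ψ k, f⟫_ℂ‖ ^ 2 : ℝ)‖ := (Real.norm_eq_abs _).symm
  have h4 : ‖⟪f, S' f⟫_ℂ‖ ≤ ‖f‖ * ‖S' f‖ := norm_inner_le_norm f (S' f)
  rcases eq_or_ne ‖f‖ 0 with h | h
  · rw [h]; simp [norm_nonneg]
  · have hpos : 0 < ‖f‖ := (norm_nonneg f).lt_of_ne' h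
    nlinarith

/-- the frame operator is bijective; we package it as a CLE -/
lemma frameOp_bijective {S' : H →L[ℂ] H}
    (hS : ∀ f : H, HasSum (fun k => ⟪ψ k, f⟫_ℂ • ψ k) (S' f))
    (hΨ : IsFrame ψ A B) :
    LinearMap.ker (S' : H →ₗ[ℂ] H) = ⊥ ∧ LinearMap.range (S' : H →ₗ[ℂ] H) = ⊤ := by
  have hA := hΨ.1
  have hbd : ∀ f, ‖f‖ ≤ (Real.toNNReal A⁻¹ : ℝ≥0) * ‖S' f‖ := by
    intro f
    have := frameOp_norm_le hS hΨ f
    have h2 : (Real.toNNReal A⁻¹ : ℝ) = A⁻¹ := Real.coe_toNNReal _ (by positivity)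
    rw [h2, ← div_eq_inv_mul, le_div_iff₀ hA]
    nlinarith [this]
  have hanti := S'.antilipschitz_of_bound hbd
  have hker : LinearMap.ker (S' : H →ₗ[ℂ] H) = ⊥ :=
    (LinearMap.ker_eq_bot (f := (S' : H →ₗ[ℂ] H))).mpr hanti.injective
  refine ⟨hker, ?_⟩
  have hclosed : IsClosed (LinearMap.range (S' : H →ₗ[ℂ] H) : Set H) :=
    hanti.isClosed_range S'.uniformContinuous
  have : CompleteSpace (LinearMap.range (S' : H →ₗ[ℂ] H)) := hclosed.completeSpace_coe
  rw [← Submodule.orthogonal_eq_bot_iff]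
  rw [Submodule.eq_bot_iff]
  intro g hg
  have h0 : ⟪S' g, g⟫_ℂ = 0 := hg (S' g) (LinearMap.mem_range_self _ g)
  have h1 : ⟪g, S' g⟫_ℂ = 0 := by
    rw [← inner_conj_symm, h0, map_zero]
  have h2 := inner_frameOp hS hΨ g
  rw [h1] at h2
  have h3 : (∑' k, ‖⟪ψ k, g⟫_ℂ‖ ^ 2 : ℝ) = 0 := by exact_mod_cast h2.symm
  have h4 := (hΨ.2 g).2.1
  rw [h3] at h4
  have h5 : ‖g‖ ^ 2 ≤ 0 := by nlinarith
  have h6 : ‖g‖ = 0 := by nlinarith [sq_nonneg ‖g‖, norm_nonneg g]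
  exact norm_eq_zero.mp h6


/-- reconstruction with the canonical dual, and synthesis convergence for the dual -/
lemma dual_facts {S' : H →L[ℂ] H} {dψ : ℕ → H}
    (hΨ : IsFrame ψ A B)
    (hS : ∀ f : H, HasSum (fun k => ⟪ψ k, f⟫_ℂ • ψ k) (S' f))
    (hd : ∀ k, S' (dψ k) = ψ k) :
    (∀ f : H, HasSum (fun k => ⟪ψ k, f⟫_ℂ • dψ k) f) ∧
    (∀ c : ℓ², ∃ h : H, HasSum (fun n => c n • dψ n) h) := by
  obtain ⟨hker, hrange⟩ := frameOp_bijective hS hΨ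
  set E := ContinuousLinearEquiv.ofBijective S' hker hrange with hE
  have hEapp : ∀ x, E x = S' x := fun x =>
    congrFun (ContinuousLinearEquiv.coeFn_ofBijective S' hker hrange) x
  have hdual : ∀ k, E.symm (ψ k) = dψ k := by
    intro k
    rw [← hd k, ← hEapp (dψ k)]
    exact E.symm_apply_apply (dψ k)
  constructor
  · intro f
    have h1 := (E.symm : H →L[ℂ] H).hasSum (hS f)
    have h2 : (fun k => (E.symm : H →L[ℂ] H) (⟪ψ k, f⟫_ℂ • ψ k))
        = fun k => ⟪ψ k, f⟫_ℂ • dψ k := by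
      funext k
      rw [map_smul]
      congr 1
      exact hdual k
    rw [h2] at h1
    have h3 : (E.symm : H →L[ℂ] H) (S' f) = f := by
      rw [← hEapp f]
      exact E.symm_apply_apply f
    rwa [h3] at h1
  · intro c
    obtain ⟨h, hh⟩ := exists_synthesis hΨ c
    refine ⟨E.symm h, ?_⟩
    have h1 := (E.symm : H →L[ℂ] H).hasSum hh
    have h2 : (fun k => (E.symm : H →L[ℂ] H) (c k • ψ k))
        = fun k => c k • dψ k := by
      funext k
      rw [map_smul]
      congr 1
      exact hdual k
    rwa [h2] at h1

/-- key computation: the matrix action as an inner product -/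
lemma matrix_entry {dψ : ℕ → H} (O : H →L[ℂ] H) {c : ℕ → ℂ} {h : H} (m : ℕ)
    (hh : HasSum (fun n => c n • dψ n) h) :
    HasSum (fun n => ⟪ψ m, O (dψ n)⟫_ℂ * c n) ⟪ψ m, O h⟫_ℂ := by
  have h1 := (innerSL ℂ (ψ m)).hasSum (O.hasSum hh)
  have h2 : (fun n => (innerSL ℂ (ψ m)) (O (c n • dψ n)))
      = fun n => ⟪ψ m, O (dψ n)⟫_ℂ * c n := by
    funext n
    simp only [innerSL_apply_apply, map_smul, inner_smul_right]
    rw [smul_eq_mul]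
    ring
  rwa [h2] at h1

end aux

/-- For a frame `ψ` with canonical dual `dψ`, the map
`O ↦ (⟨O ψ̃ₙ, ψₘ⟩)ₘₙ` from `B(H)` to `B(ℓ²)` is a linear, injective and multiplicative,
i.e. an injective algebra homomorphism. -/
theorem stmt7 {ψ : ℕ → H₁} {A B : ℝ}
    (hΨ : IsFrame ψ A B)
    (S : H₁ →L[ℂ] H₁) (dψ : ℕ → H₁) (hdΨ : IsCanonicalDual ψ S dψ)
    (𝓜 : (H₁ →L[ℂ] H₁) → (ℓ² →L[ℂ] ℓ²))
    (h𝓜 : ∀ (O : H₁ →L[ℂ] H₁) (c : ℓ²) (m : ℕ),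
      𝓜 O c m = ∑' n, ⟪ψ m, O (dψ n)⟫_ℂ * c n) :
    Function.Injective 𝓜 ∧
    (∀ (a : ℂ) (O P : H₁ →L[ℂ] H₁), 𝓜 (a • O + P) = a • 𝓜 O + 𝓜 P) ∧
    (∀ O P : H₁ →L[ℂ] H₁, 𝓜 (O.comp P) = (𝓜 O).comp (𝓜 P)) := by
  obtain ⟨hS, hd⟩ := hdΨ
  obtain ⟨hrec, hsyn⟩ := dual_facts hΨ hS hd
  have hrep : ∀ (O : H₁ →L[ℂ] H₁) (c : ℓ²) (h : H₁),
      HasSum (fun n => c n • dψ n) h → ∀ m, 𝓜 O c m = ⟪ψ m, O h⟫_ℂ := by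
    intro O c h hh m
    rw [h𝓜]
    exact (matrix_entry O m hh).tsum_eq
  refine ⟨?_, ?_, ?_⟩
  · -- injectivity
    intro O P hOP
    have hent : ∀ m n, ⟪ψ m, O (dψ n)⟫_ℂ = ⟪ψ m, P (dψ n)⟫_ℂ := by
      intro m n
      have hsingle : HasSum (fun k => (lp.single 2 n (1:ℂ) : ℓ²) k • dψ k) (dψ n) := by
        have heq : (fun k => (lp.single 2 n (1:ℂ) : ℓ²) k • dψ k)
            = fun k => if k = n then dψ n else 0 := by
          funext k
          rw [lp.single_apply]
          split_ifs with hkn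
          · subst hkn; simp
          · simp [Pi.single_apply, hkn]
        rw [heq]
        exact hasSum_ite_eq n (dψ n)
      have h1 := hrep O (lp.single 2 n 1) (dψ n) hsingle m
      have h2 := hrep P (lp.single 2 n 1) (dψ n) hsingle m
      rw [← h1, ← h2, hOP]
    have hdeq : ∀ n, O (dψ n) = P (dψ n) := by
      intro n
      have hz : ∀ m, ⟪ψ m, O (dψ n) - P (dψ n)⟫_ℂ = 0 := by
        intro m
        rw [inner_sub_right, hent m n, sub_self]
      have := eq_zero_of_inner_eq_zero hΨ hz
      rwa [sub_eq_zero] at this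
    ext f
    have h1 := O.hasSum (hrec f)
    have h2 := P.hasSum (hrec f)
    simp only [map_smul] at h1 h2
    have heq : (fun k => ⟪ψ k, f⟫_ℂ • O (dψ k)) = fun k => ⟪ψ k, f⟫_ℂ • P (dψ k) := by
      funext k
      rw [hdeq k]
    rw [heq] at h1
    exact h1.unique h2
  · -- linearity
    intro a O P
    refine ContinuousLinearMap.ext fun c => lp.ext (funext fun m => ?_)
    obtain ⟨h, hh⟩ := hsyn c
    have hL := hrep (a • O + P) c h hh m
    have hO := hrep O c h hh m
    have hP := hrep P c h hh m
    have hR : ((a • 𝓜 O + 𝓜 P) c : ℓ²) m = a * (𝓜 O c) m + (𝓜 P c) m := by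
      rw [ContinuousLinearMap.add_apply, ContinuousLinearMap.smul_apply]
      rw [lp.coeFn_add, Pi.add_apply, lp.coeFn_smul, Pi.smul_apply, smul_eq_mul]
    show (𝓜 (a • O + P) c : ℓ²) m = ((a • 𝓜 O + 𝓜 P) c : ℓ²) m
    rw [hL, hR, hO, hP, ContinuousLinearMap.add_apply, ContinuousLinearMap.smul_apply,
      inner_add_right, inner_smul_right]
  · -- multiplicativity
    intro O P
    refine ContinuousLinearMap.ext fun c => lp.ext (funext fun m => ?_)
    obtain ⟨h, hh⟩ := hsyn c
    have hL := hrep (O.comp P) c h hh m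
    have hPc : ∀ n, (𝓜 P c) n = ⟪ψ n, P h⟫_ℂ := fun n => hrep P c h hh n
    have hh2 : HasSum (fun n => (𝓜 P c) n • dψ n) (P h) := by
      have heq : (fun n => (𝓜 P c) n • dψ n) = fun n => ⟪ψ n, P h⟫_ℂ • dψ n := by
        funext n
        rw [hPc n]
      rw [heq]
      exact hrec (P h)
    have hR := hrep O (𝓜 P c) (P h) hh2 m
    show (𝓜 (O.comp P) c : ℓ²) m = ((𝓜 O).comp (𝓜 P) c : ℓ²) m
    rw [hL, ContinuousLinearMap.comp_apply, ContinuousLinearMap.comp_apply, hR]
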